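/- For ρ > 0, the function Ξ_ρ(s) = ∫₀^∞ t^(s/2-1) Ψ(t) e^{-ρ log²(t)} dt, viewed as a smooth function of (ρ, s) with s real (or as a holomorphic function of s for fixed ρ), satisfies the heat equation ∂_ρ Ξ_ρ(s) + 4·∂²_s Ξ_ρ(s) = 0. -/

import Mathlib

open MeasureTheory Real Filter Set

noncomputable def Psi (t : ℝ) : ℝ := ∑' n : ℕ, Real.exp (-Real.pi * ((n : ℝ) + 1) ^ 2 * t)

noncomputable def Xi (ρ : ℝ) (s : ℂ) : ℂ :=
  ∫ t in Set.Ioi (0:ℝ), (t : ℂ) ^ (s / 2 - 1) * (Psi t : ℂ) * (Real.exp (-ρ * Real.log t ^ 2) : ℂ)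

lemma psi_term_le {t : ℝ} (ht : 0 < t) (n : ℕ) :
    Real.exp (-Real.pi * ((n : ℝ) + 1) ^ 2 * t) ≤ Real.exp (-Real.pi * t) ^ (n + 1) := by
  rw [← Real.exp_nat_mul]
  apply Real.exp_le_exp.2
  have h1 : (0:ℝ) ≤ (n:ℝ) := Nat.cast_nonneg n
  push_cast
  nlinarith [mul_nonneg (mul_nonneg Real.pi_pos.le ht.le) (mul_nonneg h1 (by linarith : (0:ℝ) ≤ (n:ℝ)+1))]

lemma exp_neg_pi_lt_one {t : ℝ} (ht : 0 < t) : Real.exp (-Real.pi * t) < 1 := by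
  rw [Real.exp_lt_one_iff]; nlinarith [Real.pi_pos]

lemma geo_summable {t : ℝ} (ht : 0 < t) :
    Summable (fun n : ℕ => Real.exp (-Real.pi * t) ^ (n + 1)) := by
  have := (summable_geometric_of_lt_one (Real.exp_pos _).le (exp_neg_pi_lt_one ht)).mul_left
    (Real.exp (-Real.pi * t))
  exact this.congr (fun n => by rw [pow_succ]; ring)

lemma psi_summable {t : ℝ} (ht : 0 < t) :
    Summable (fun n : ℕ => Real.exp (-Real.pi * ((n : ℝ) + 1) ^ 2 * t)) :=
  Summable.of_nonneg_of_le (fun _ => (Real.exp_pos _).le) (psi_term_le ht) (geo_summable ht)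

lemma psi_nonneg (t : ℝ) : 0 ≤ Psi t := tsum_nonneg fun _ => (Real.exp_pos _).le

lemma psi_le {t : ℝ} (ht : 0 < t) : Psi t ≤ 1 / (Real.pi * t) := by
  have h1 : Psi t ≤ ∑' n : ℕ, Real.exp (-Real.pi * t) ^ (n + 1) :=
    Summable.tsum_le_tsum (psi_term_le ht) (psi_summable ht) (geo_summable ht)
  have h2 : ∑' n : ℕ, Real.exp (-Real.pi * t) ^ (n + 1)
      = Real.exp (-Real.pi * t) / (1 - Real.exp (-Real.pi * t)) := by
    simp_rw [pow_succ, mul_comm _ (Real.exp (-Real.pi * t))]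
    rw [tsum_mul_left, tsum_geometric_of_lt_one (Real.exp_pos _).le (exp_neg_pi_lt_one ht),
      div_eq_mul_inv]
  have hx : 0 < Real.pi * t := by positivity
  have hep : 0 < Real.exp (Real.pi * t) := Real.exp_pos _
  have hgt : Real.pi * t + 1 ≤ Real.exp (Real.pi * t) := Real.add_one_le_exp _
  have h4 : Real.exp (-Real.pi * t) / (1 - Real.exp (-Real.pi * t))
      = 1 / (Real.exp (Real.pi * t) - 1) := by
    rw [neg_mul, Real.exp_neg]
    rw [div_eq_div_iff]
    · field_simp
    · have := exp_neg_pi_lt_one ht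
      rw [neg_mul, Real.exp_neg] at this
      linarith
    · linarith
  have h5 : 1 / (Real.exp (Real.pi * t) - 1) ≤ 1 / (Real.pi * t) :=
    one_div_le_one_div_of_le hx (by linarith)
  linarith

lemma cont_aux {a : ℝ} (ha : 0 < a) :
    ContinuousOn (fun t => ∑' n : ℕ, Real.exp (-Real.pi * ((n : ℝ) + 1) ^ 2 * t)) (Ioi a) := by
  apply continuousOn_tsum (u := fun n : ℕ => Real.exp (-Real.pi * a) ^ (n+1))
  · intro i; fun_prop
  · have := (summable_geometric_of_lt_one (Real.exp_pos (-Real.pi*a)).le (by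
      rw [Real.exp_lt_one_iff]; nlinarith [Real.pi_pos])).mul_left (Real.exp (-Real.pi * a))
    exact this.congr (fun n => by rw [pow_succ]; ring)
  · intro n x hx
    rw [Real.norm_eq_abs, abs_of_pos (Real.exp_pos _), ← Real.exp_nat_mul]
    apply Real.exp_le_exp.2
    have hx' : a < x := hx
    have h1 : (0:ℝ) ≤ (n:ℝ) := Nat.cast_nonneg n
    have h2 : (0:ℝ) ≤ (n:ℝ) + 1 := by linarith
    push_cast
    nlinarith [mul_nonneg (mul_nonneg Real.pi_pos.le (by linarith : (0:ℝ) ≤ x)) (mul_nonneg h2 h1),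
      mul_nonneg (mul_nonneg Real.pi_pos.le (by linarith : (0:ℝ) ≤ x - a)) h2]

lemma rpow_exp_bound {r : ℝ} (c d : ℝ) (hr : 0 < r) {t : ℝ} (ht : 0 < t) :
    t ^ c * Real.exp (-r * Real.log t ^ 2) ≤ Real.exp ((c - d)^2 / (4*r)) * t ^ d := by
  rw [Real.rpow_def_of_pos ht, Real.rpow_def_of_pos ht, ← Real.exp_add, ← Real.exp_add]
  apply Real.exp_le_exp.2
  set u := Real.log t
  have h2 : u*(c-d) - r*u^2 ≤ (c-d)^2/(4*r) := by
    rw [le_div_iff₀ (by positivity : (0:ℝ) < 4*r)]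
    nlinarith [sq_nonneg (2*r*u - (c-d))]
  linarith

lemma master0 (c : ℝ) {r : ℝ} (hr : 0 < r) :
    IntegrableOn (fun t : ℝ => t ^ c * Real.exp (-r * Real.log t ^ 2)) (Ioi 0) := by
  have hcont : ContinuousOn (fun t : ℝ => t ^ c * Real.exp (-r * Real.log t ^ 2)) (Ioi 0) := by
    apply ContinuousOn.mul
    · exact fun x hx => (Real.continuousAt_rpow_const x c (Or.inl (ne_of_gt hx))).continuousWithinAt
    · refine Real.continuous_exp.comp_continuousOn ?_
      have hlog : ContinuousOn Real.log (Ioi 0) :=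
        Real.continuousOn_log.mono (fun x hx => ne_of_gt hx)
      exact (continuousOn_const.mul (hlog.pow 2))
  rw [show Ioi (0:ℝ) = Ioc (0:ℝ) 1 ∪ Ioi 1 from (Ioc_union_Ioi_eq_Ioi zero_le_one).symm]
  apply IntegrableOn.union
  · have hbase : IntegrableOn (fun t : ℝ => t ^ (-1/2 : ℝ)) (Ioc (0:ℝ) 1) := by
      rw [← intervalIntegrable_iff_integrableOn_Ioc_of_le zero_le_one]
      exact intervalIntegral.intervalIntegrable_rpow' (by norm_num)
    apply Integrable.mono' ((hbase.const_mul (Real.exp ((c - (-1/2))^2 / (4*r)))))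
    · exact (hcont.mono Ioc_subset_Ioi_self).aestronglyMeasurable measurableSet_Ioc
    · filter_upwards [ae_restrict_mem measurableSet_Ioc] with t ht
      have ht0 : 0 < t := ht.1
      rw [Real.norm_eq_abs, abs_of_nonneg (by positivity)]
      exact rpow_exp_bound c (-1/2) hr ht0
  · have hbase : IntegrableOn (fun t : ℝ => t ^ (-2 : ℝ)) (Ioi (1:ℝ)) :=
      integrableOn_Ioi_rpow_of_lt (by norm_num) one_pos
    apply Integrable.mono' ((hbase.const_mul (Real.exp ((c - (-2))^2 / (4*r)))))
    · exact (hcont.mono (Ioi_subset_Ioi zero_le_one)).aestronglyMeasurable measurableSet_Ioi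
    · filter_upwards [ae_restrict_mem measurableSet_Ioi] with t ht
      have ht0 : (0:ℝ) < t := lt_trans one_pos ht
      rw [Real.norm_eq_abs, abs_of_nonneg (by positivity)]
      exact rpow_exp_bound c (-2) hr ht0

lemma abs_log_pow_le (k : ℕ) {t : ℝ} (ht : 0 < t) :
    |Real.log t| ^ k ≤ t ^ (k : ℝ) + t ^ (-(k : ℝ)) := by
  set u := Real.log t
  have h1 : |u| ^ k ≤ Real.exp ((k:ℝ) * |u|) := by
    calc |u| ^ k ≤ Real.exp |u| ^ k :=
          pow_le_pow_left₀ (abs_nonneg u) (by linarith [Real.add_one_le_exp |u|]) k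
      _ = Real.exp ((k:ℝ) * |u|) := by rw [← Real.exp_nat_mul]
  have h2 : Real.exp ((k:ℝ) * |u|) ≤ Real.exp ((k:ℝ) * u) + Real.exp (-((k:ℝ) * u)) := by
    rcases abs_cases u with ⟨h, _⟩ | ⟨h, _⟩
    · rw [h]; linarith [Real.exp_pos (-((k:ℝ) * u))]
    · rw [h, mul_neg, ← neg_mul]
      linarith [Real.exp_pos ((k:ℝ) * u)]
  have h3 : t ^ (k : ℝ) = Real.exp ((k:ℝ) * u) := by
    rw [Real.rpow_def_of_pos ht, mul_comm]
  have h4 : t ^ (-(k : ℝ)) = Real.exp (-((k:ℝ) * u)) := by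
    rw [Real.rpow_def_of_pos ht, mul_comm, neg_mul]
  rw [h3, h4]; linarith

lemma masterB (c : ℝ) (k : ℕ) {r : ℝ} (hr : 0 < r) :
    IntegrableOn (fun t : ℝ => t ^ c * |Real.log t| ^ k * Real.exp (-r * Real.log t ^ 2))
      (Ioi 0) := by
  have hcont : ContinuousOn
      (fun t : ℝ => t ^ c * |Real.log t| ^ k * Real.exp (-r * Real.log t ^ 2)) (Ioi 0) := by
    have hlog : ContinuousOn Real.log (Ioi 0) :=
      Real.continuousOn_log.mono (fun x hx => ne_of_gt hx)
    apply ContinuousOn.mul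
    · apply ContinuousOn.mul
      · exact fun x hx =>
          (Real.continuousAt_rpow_const x c (Or.inl (ne_of_gt hx))).continuousWithinAt
      · exact (hlog.abs.pow k)
    · exact Real.continuous_exp.comp_continuousOn (continuousOn_const.mul (hlog.pow 2))
  apply Integrable.mono' (((master0 (c + k) hr).add (master0 (c - k) hr)))
  · exact hcont.aestronglyMeasurable measurableSet_Ioi
  · filter_upwards [ae_restrict_mem measurableSet_Ioi] with t ht
    have ht0 : (0:ℝ) < t := ht
    rw [Real.norm_eq_abs, abs_of_nonneg (by positivity)]
    have h1 := abs_log_pow_le k ht0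
    have e1 : t ^ (c + (k:ℝ)) = t ^ c * t ^ (k:ℝ) := Real.rpow_add ht0 _ _
    have e2 : t ^ (c - (k:ℝ)) = t ^ c * t ^ (-(k:ℝ)) := by
      rw [sub_eq_add_neg, Real.rpow_add ht0]
    have htc : (0:ℝ) ≤ t ^ c := Real.rpow_nonneg ht0.le c
    have hexp : (0:ℝ) < Real.exp (-r * Real.log t ^ 2) := Real.exp_pos _
    calc t ^ c * |Real.log t| ^ k * Real.exp (-r * Real.log t ^ 2)
        ≤ t ^ c * (t ^ (k:ℝ) + t ^ (-(k:ℝ))) * Real.exp (-r * Real.log t ^ 2) := by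
          apply mul_le_mul_of_nonneg_right _ hexp.le
          exact mul_le_mul_of_nonneg_left h1 htc
      _ = t ^ (c + (k:ℝ)) * Real.exp (-r * Real.log t ^ 2)
          + t ^ (c - (k:ℝ)) * Real.exp (-r * Real.log t ^ 2) := by
          rw [e1, e2]; ring

lemma psi_continuousOn : ContinuousOn Psi (Ioi 0) := by
  intro t ht
  have ht0 : (0:ℝ) < t := ht
  have h := (cont_aux (by positivity : (0:ℝ) < t/2)) t (by simp [mem_Ioi]; linarith)
  have h2 : ContinuousAt (fun t => ∑' n : ℕ, Real.exp (-Real.pi * ((n : ℝ) + 1) ^ 2 * t)) t :=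
    (cont_aux (by positivity : (0:ℝ) < t/2)).continuousAt (Ioi_mem_nhds (by linarith))
  exact h2.continuousWithinAt

noncomputable def Kern (r : ℝ) (z : ℂ) (t : ℝ) : ℂ :=
  (t : ℂ) ^ (z / 2 - 1) * (Psi t : ℂ) * (Real.exp (-r * Real.log t ^ 2) : ℂ)

lemma kern_contOn (r : ℝ) (z : ℂ) : ContinuousOn (Kern r z) (Ioi 0) := by
  apply ContinuousOn.mul
  · apply ContinuousOn.mul
    · exact fun t ht =>
        (Complex.continuousAt_ofReal_cpow_const t _ (Or.inr (ne_of_gt ht))).continuousWithinAt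
    · exact Complex.continuous_ofReal.comp_continuousOn psi_continuousOn
  · apply Complex.continuous_ofReal.comp_continuousOn
    apply Real.continuous_exp.comp_continuousOn
    exact continuousOn_const.mul
      ((Real.continuousOn_log.mono (fun x hx => ne_of_gt hx)).pow 2)

lemma kern_norm_le {t : ℝ} (ht : 0 < t) (r : ℝ) (z : ℂ) :
    ‖Kern r z t‖ ≤ (1/Real.pi) * (t ^ (z.re/2 - 2) * Real.exp (-r * Real.log t ^ 2)) := by
  have h1 : ‖Kern r z t‖
      = t ^ (z.re/2 - 1) * Psi t * Real.exp (-r * Real.log t ^ 2) := by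
    unfold Kern
    rw [norm_mul, norm_mul, Complex.norm_cpow_eq_rpow_re_of_pos ht,
      Complex.norm_real, Complex.norm_real, Real.norm_eq_abs, Real.norm_eq_abs,
      abs_of_nonneg (psi_nonneg t), abs_of_nonneg (Real.exp_pos _).le]
    norm_num
  rw [h1]
  have h2 : Psi t ≤ 1/Real.pi * t ^ (-1:ℝ) := by
    rw [Real.rpow_neg_one]
    have := psi_le ht
    rw [one_div, mul_inv] at this
    simpa [one_div] using this
  have h3 : t ^ (z.re/2 - 1) * (1/Real.pi * t ^ (-1:ℝ)) =
      1/Real.pi * t ^ (z.re/2 - 2) := by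
    rw [mul_comm (1/Real.pi), ← mul_assoc, ← Real.rpow_add ht]
    rw [show z.re / 2 - 1 + -1 = z.re / 2 - 2 by ring]
    ring
  calc t ^ (z.re/2 - 1) * Psi t * Real.exp (-r * Real.log t ^ 2)
      ≤ t ^ (z.re/2 - 1) * (1/Real.pi * t ^ (-1:ℝ)) * Real.exp (-r * Real.log t ^ 2) := by
        apply mul_le_mul_of_nonneg_right _ (Real.exp_pos _).le
        exact mul_le_mul_of_nonneg_left h2 (Real.rpow_nonneg ht.le _)
    _ = 1/Real.pi * (t ^ (z.re/2 - 2) * Real.exp (-r * Real.log t ^ 2)) := by rw [h3]; ring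

lemma kern_log_integrable (m : ℕ) {r : ℝ} (hr : 0 < r) (z : ℂ) :
    IntegrableOn (fun t => ((Real.log t : ℝ) : ℂ) ^ m * Kern r z t) (Ioi 0) := by
  apply Integrable.mono' (((masterB (z.re/2 - 2) m hr).const_mul (1/Real.pi)))
  · apply ContinuousOn.aestronglyMeasurable _ measurableSet_Ioi
    apply ContinuousOn.mul _ (kern_contOn r z)
    exact (Complex.continuous_ofReal.comp_continuousOn
      (Real.continuousOn_log.mono (fun x hx => ne_of_gt hx))).pow m
  · filter_upwards [ae_restrict_mem measurableSet_Ioi] with t ht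
    have ht0 : (0:ℝ) < t := ht
    rw [norm_mul, norm_pow, Complex.norm_real, Real.norm_eq_abs]
    calc |Real.log t| ^ m * ‖Kern r z t‖
        ≤ |Real.log t| ^ m * ((1/Real.pi) * (t ^ (z.re/2 - 2) * Real.exp (-r * Real.log t ^ 2))) := by
          exact mul_le_mul_of_nonneg_left (kern_norm_le ht0 r z) (by positivity)
      _ = 1/Real.pi * (t ^ (z.re/2 - 2) * |Real.log t| ^ m * Real.exp (-r * Real.log t ^ 2)) := by
          ring

lemma kern_integrable {r : ℝ} (hr : 0 < r) (z : ℂ) : IntegrableOn (Kern r z) (Ioi 0) := by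
  have := kern_log_integrable 0 hr z
  simpa using this

lemma derivR {ρ : ℝ} (hρ : 0 < ρ) (s : ℂ) :
    IntegrableOn (fun t => -((Real.log t : ℂ)) ^ 2 * Kern ρ s t) (Ioi 0) ∧
    HasDerivAt (fun r : ℝ => ∫ t in Ioi (0:ℝ), Kern r s t)
      (∫ t in Ioi (0:ℝ), -((Real.log t : ℂ)) ^ 2 * Kern ρ s t) ρ := by
  refine hasDerivAt_integral_of_dominated_loc_of_deriv_le (s := Metric.ball ρ (ρ/2)) (Metric.ball_mem_nhds ρ (half_pos hρ))
    (F := fun r t => Kern r s t) (F' := fun r t => -((Real.log t : ℂ)) ^ 2 * Kern r s t)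
    (bound := fun t => (1/Real.pi) * (t ^ (s.re/2 - 2) * |Real.log t| ^ 2
      * Real.exp (-(ρ/2) * Real.log t ^ 2))) ?_ ?_ ?_ ?_ ?_ ?_
  · exact Eventually.of_forall fun r =>
      ((kern_contOn r s).aestronglyMeasurable measurableSet_Ioi)
  · exact kern_integrable hρ s
  · apply ContinuousOn.aestronglyMeasurable _ measurableSet_Ioi
    apply ContinuousOn.mul _ (kern_contOn ρ s)
    exact (((Complex.continuous_ofReal.comp_continuousOn
      (Real.continuousOn_log.mono (fun x hx => ne_of_gt hx))).pow 2).neg)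
  · filter_upwards [ae_restrict_mem measurableSet_Ioi] with t ht
    intro r hr
    have ht0 : (0:ℝ) < t := ht
    have hr2 : ρ/2 < r := by
      have := abs_lt.1 (by simpa [Metric.mem_ball, Real.dist_eq] using hr)
      linarith [this.1]
    have h1 : ‖-((Real.log t : ℂ)) ^ 2 * Kern r s t‖
        = Real.log t ^ 2 * ‖Kern r s t‖ := by
      rw [norm_mul, norm_neg, norm_pow, Complex.norm_real, Real.norm_eq_abs, sq_abs]
    rw [h1]
    have h2 := kern_norm_le ht0 r s
    have h3 : Real.exp (-r * Real.log t ^ 2) ≤ Real.exp (-(ρ/2) * Real.log t ^ 2) := by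
      apply Real.exp_le_exp.2
      nlinarith [sq_nonneg (Real.log t)]
    calc Real.log t ^ 2 * ‖Kern r s t‖
        ≤ Real.log t ^ 2 * ((1/Real.pi) * (t ^ (s.re/2 - 2) * Real.exp (-r * Real.log t ^ 2))) :=
          mul_le_mul_of_nonneg_left h2 (sq_nonneg _)
      _ ≤ Real.log t ^ 2 * ((1/Real.pi) * (t ^ (s.re/2 - 2) * Real.exp (-(ρ/2) * Real.log t ^ 2))) := by
          apply mul_le_mul_of_nonneg_left _ (sq_nonneg _)
          apply mul_le_mul_of_nonneg_left _ (by positivity)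
          exact mul_le_mul_of_nonneg_left h3 (Real.rpow_nonneg ht0.le _)
      _ = (1/Real.pi) * (t ^ (s.re/2 - 2) * |Real.log t| ^ 2
            * Real.exp (-(ρ/2) * Real.log t ^ 2)) := by rw [sq_abs]; ring
  · exact (masterB (s.re/2 - 2) 2 (half_pos hρ)).const_mul _
  · filter_upwards [ae_restrict_mem measurableSet_Ioi] with t ht
    intro r hr
    have ht0 : (0:ℝ) < t := ht
    set u := Real.log t
    have h0 : HasDerivAt (fun r : ℝ => -r * u ^ 2) (-u^2) r := by
      simpa using ((hasDerivAt_id r).neg.mul_const (u^2))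
    have h1 := (h0.exp).ofReal_comp
    have h2 := h1.const_mul ((t : ℂ) ^ (s / 2 - 1) * (Psi t : ℂ))
    convert h2 using 1
    · rfl
    · rfl
    unfold Kern
    push_cast
    ring

lemma rpow_le_add {t b b1 b2 : ℝ} (ht : 0 < t) (h1 : b1 ≤ b) (h2 : b ≤ b2) :
    t ^ b ≤ t ^ b1 + t ^ b2 := by
  rcases le_total t 1 with h | h
  · have := Real.rpow_le_rpow_of_exponent_ge ht h h1
    linarith [Real.rpow_nonneg ht.le b2]
  · have := Real.rpow_le_rpow_of_exponent_le h h2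
    linarith [Real.rpow_nonneg ht.le b1]

lemma derivS (m : ℕ) {ρ : ℝ} (hρ : 0 < ρ) (z : ℂ) :
    HasDerivAt (fun w : ℂ => ∫ t in Ioi (0:ℝ), ((Real.log t : ℂ)/2) ^ m * Kern ρ w t)
      (∫ t in Ioi (0:ℝ), ((Real.log t : ℂ)/2) ^ (m+1) * Kern ρ z t) z := by
  have contm : ∀ (k : ℕ) (w : ℂ), ContinuousOn
      (fun t : ℝ => ((Real.log t : ℂ)/2) ^ k * Kern ρ w t) (Ioi 0) := by
    intro k w
    apply ContinuousOn.mul _ (kern_contOn ρ w)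
    exact (((Complex.continuous_ofReal.comp_continuousOn
      (Real.continuousOn_log.mono (fun x hx => ne_of_gt hx))).div_const 2).pow k)
  have intm : ∀ (k : ℕ) (w : ℂ), IntegrableOn
      (fun t : ℝ => ((Real.log t : ℂ)/2) ^ k * Kern ρ w t) (Ioi 0) := by
    intro k w
    have := (kern_log_integrable k hρ w).const_mul ((1/2 : ℂ) ^ k)
    apply this.congr
    apply Eventually.of_forall
    intro t
    simp only
    rw [div_pow]
    simp only [div_pow, one_pow]
    ring
  have norm_fac : ∀ (k : ℕ) (t : ℝ), ‖((Real.log t : ℂ)/2) ^ k‖ = (|Real.log t|/2) ^ k := by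
    intro k t
    rw [norm_pow, norm_div, Complex.norm_real, Real.norm_eq_abs]
    norm_num
  refine (hasDerivAt_integral_of_dominated_loc_of_deriv_le (s := Metric.ball z 1) (Metric.ball_mem_nhds z one_pos)
    (F := fun w t => ((Real.log t : ℂ)/2) ^ m * Kern ρ w t)
    (F' := fun w t => ((Real.log t : ℂ)/2) ^ (m+1) * Kern ρ w t)
    (bound := fun t => (1/Real.pi) * (1/2)^(m+1) *
      (t ^ (z.re/2 - 2 - 1/2) * |Real.log t| ^ (m+1) * Real.exp (-ρ * Real.log t ^ 2)
       + t ^ (z.re/2 - 2 + 1/2) * |Real.log t| ^ (m+1) * Real.exp (-ρ * Real.log t ^ 2)))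
    ?_ ?_ ?_ ?_ ?_ ?_).2
  · exact Eventually.of_forall fun w =>
      ((contm m w).aestronglyMeasurable measurableSet_Ioi)
  · exact intm m z
  · exact (contm (m+1) z).aestronglyMeasurable measurableSet_Ioi
  · filter_upwards [ae_restrict_mem measurableSet_Ioi] with t ht
    intro w hw
    have ht0 : (0:ℝ) < t := ht
    have hre : |w.re - z.re| < 1 := by
      have h1 : ‖w - z‖ < 1 := by simpa [Metric.mem_ball, dist_eq_norm] using hw
      calc |w.re - z.re| = |(w - z).re| := by rw [Complex.sub_re]
        _ ≤ ‖w - z‖ := Complex.abs_re_le_norm _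
        _ < 1 := h1
    rw [abs_lt] at hre
    have hb := rpow_le_add (b := w.re/2 - 2) (b1 := z.re/2 - 2 - 1/2) (b2 := z.re/2 - 2 + 1/2)
      ht0 (by linarith) (by linarith)
    rw [norm_mul, norm_fac (m+1) t]
    have h2 : ‖Kern ρ w t‖ ≤ (1/Real.pi) *
        ((t ^ (z.re/2 - 2 - 1/2) + t ^ (z.re/2 - 2 + 1/2)) * Real.exp (-ρ * Real.log t ^ 2)) := by
      refine (kern_norm_le ht0 ρ w).trans ?_
      apply mul_le_mul_of_nonneg_left _ (by positivity : (0:ℝ) ≤ 1/Real.pi)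
      exact mul_le_mul_of_nonneg_right hb (Real.exp_pos _).le
    calc (|Real.log t|/2) ^ (m+1) * ‖Kern ρ w t‖
        ≤ (|Real.log t|/2) ^ (m+1) * ((1/Real.pi) *
            ((t ^ (z.re/2 - 2 - 1/2) + t ^ (z.re/2 - 2 + 1/2)) * Real.exp (-ρ * Real.log t ^ 2))) :=
          mul_le_mul_of_nonneg_left h2 (by positivity)
      _ = (1/Real.pi) * (1/2)^(m+1) *
          (t ^ (z.re/2 - 2 - 1/2) * |Real.log t| ^ (m+1) * Real.exp (-ρ * Real.log t ^ 2)
           + t ^ (z.re/2 - 2 + 1/2) * |Real.log t| ^ (m+1) * Real.exp (-ρ * Real.log t ^ 2)) := by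
          rw [div_pow]
          simp only [one_div, inv_pow]
          ring
  · exact ((masterB (z.re/2 - 2 - 1/2) (m+1) hρ).add
      (masterB (z.re/2 - 2 + 1/2) (m+1) hρ)).const_mul _
  · filter_upwards [ae_restrict_mem measurableSet_Ioi] with t ht
    intro w hw
    have ht0 : (0:ℝ) < t := ht
    have htne : (t : ℂ) ≠ 0 := Complex.ofReal_ne_zero.2 (ne_of_gt ht0)
    have h1 : HasDerivAt (fun w : ℂ => w / 2 - 1) (1/2 : ℂ) w := by
      simpa using ((hasDerivAt_id w).div_const 2).sub_const 1
    have h2 := h1.const_cpow (c := (t : ℂ)) (Or.inl htne)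
    have h3 := (h2.mul_const ((Psi t : ℂ) * (Real.exp (-ρ * Real.log t ^ 2) : ℂ))).const_mul
      (((Real.log t : ℂ)/2) ^ m)
    convert h3 using 1
    · rfl
    · funext x; unfold Kern; simp only [mul_assoc]
    · unfold Kern
      rw [Complex.ofReal_log ht0.le, pow_succ]
      ring

lemma xi_eq (r : ℝ) (z : ℂ) : Xi r z = ∫ t in Ioi (0:ℝ), Kern r z t := rfl

theorem stmt4 (ρ : ℝ) (hρ : 0 < ρ) (s : ℂ) :
    deriv (fun r : ℝ => Xi r s) ρ + 4 * iteratedDeriv 2 (fun z : ℂ => Xi ρ z) s = 0 := by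
  have hR : deriv (fun r : ℝ => Xi r s) ρ
      = ∫ t in Ioi (0:ℝ), -((Real.log t : ℂ)) ^ 2 * Kern ρ s t := by
    have := (derivR hρ s).2
    simp only [← xi_eq] at this
    exact this.deriv
  have hf : (fun z : ℂ => Xi ρ z)
      = fun w => ∫ t in Ioi (0:ℝ), ((Real.log t : ℂ)/2) ^ 0 * Kern ρ w t := by
    funext w
    rw [xi_eq]
    simp
  have hd1 : deriv (fun z : ℂ => Xi ρ z)
      = fun w => ∫ t in Ioi (0:ℝ), ((Real.log t : ℂ)/2) ^ 1 * Kern ρ w t := by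
    funext w
    rw [hf]
    exact (derivS 0 hρ w).deriv
  have hS : iteratedDeriv 2 (fun z : ℂ => Xi ρ z) s
      = ∫ t in Ioi (0:ℝ), ((Real.log t : ℂ)/2) ^ 2 * Kern ρ s t := by
    rw [show (2:ℕ) = 1 + 1 from rfl, iteratedDeriv_succ, iteratedDeriv_one, hd1]
    exact (derivS 1 hρ s).deriv
  rw [hR, hS]
  have h4 : (4:ℂ) * ∫ t in Ioi (0:ℝ), ((Real.log t : ℂ)/2) ^ 2 * Kern ρ s t
      = ∫ t in Ioi (0:ℝ), ((Real.log t : ℂ)) ^ 2 * Kern ρ s t := by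
    rw [← integral_const_mul]
    congr 1
    funext t
    ring
  have hI1 : IntegrableOn (fun t : ℝ => -((Real.log t : ℂ)) ^ 2 * Kern ρ s t) (Ioi 0) :=
    (kern_log_integrable 2 hρ s).neg.congr
      (Eventually.of_forall fun t => by simp only [Pi.neg_apply]; ring)
  rw [h4, ← integral_add hI1 (kern_log_integrable 2 hρ s)]
  have hzero : (fun t : ℝ => -((Real.log t : ℂ)) ^ 2 * Kern ρ s t
      + ((Real.log t : ℂ)) ^ 2 * Kern ρ s t) = fun _ => 0 := by
    funext t; ring
  rw [hzero, integral_zero]
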